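/- Durfee-type splitting identity: for all natural numbers m and n, the following identity holds in ℤ[[q]]: 1/((q;q)_m (q;q)_n) = Σ q^{rt} / ((q;q)_r (q;q)_s (q;q)_t), where the sum is over all triples (r,s,t) of natural numbers with r + s = m and s + t = n (equivalently, over s = 0, 1, …, min(m,n) with r = m − s and t = n − s). -/

import Mathlib

/-!
STATEMENT 8 (Durfee-type splitting identity). Work in ℤ[[q]] (`PowerSeries ℤ`,
with `q := PowerSeries.X`).  `(q;q)_n = ∏_{j=1}^n (1 - q^j)` is a unit of
ℤ[[q]]; `Ring.inverse` yields its inverse (`1/(q;q)_n`).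

The statement: for all natural numbers `m`, `n`,
`1/((q;q)_m (q;q)_n) = Σ q^{rt} / ((q;q)_r (q;q)_s (q;q)_t)`, the (finite) sum
being over all triples `(r,s,t)` of naturals with `r + s = m` and `s + t = n`,
i.e. over `s = 0, 1, …, min m n` with `r = m − s`, `t = n − s`.
-/

noncomputable section
open PowerSeries

/-- `(q;q)_n = ∏_{j=1}^n (1 - q^j)`. -/
def qPoch (n : ℕ) : PowerSeries ℤ :=
  ∏ j ∈ Finset.range n, (1 - (X : PowerSeries ℤ) ^ (j + 1))

lemma qPoch_zero : qPoch 0 = 1 := Finset.prod_range_zero _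

lemma qPoch_succ (n : ℕ) :
    qPoch (n + 1) = qPoch n * (1 - (X : PowerSeries ℤ) ^ (n + 1)) :=
  Finset.prod_range_succ _ _

lemma isUnit_qPoch (n : ℕ) : IsUnit (qPoch n) := by
  rw [PowerSeries.isUnit_iff_constantCoeff]
  have : constantCoeff (qPoch n) = 1 := by
    simp [qPoch, zero_pow]
  rw [this]
  exact isUnit_one

lemma isUnit_one_sub (k : ℕ) : IsUnit (1 - (X : PowerSeries ℤ) ^ (k + 1)) := by
  rw [PowerSeries.isUnit_iff_constantCoeff]
  have : constantCoeff (1 - (X : PowerSeries ℤ) ^ (k + 1)) = 1 := by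
    simp [zero_pow]
  rw [this]
  exact isUnit_one

/-- The summand: `q^{a·b} / ((q;q)_a (q;q)_s (q;q)_b)`. -/
def trm (a s b : ℕ) : PowerSeries ℤ :=
  (X : PowerSeries ℤ) ^ (a * b) * Ring.inverse (qPoch a * qPoch s * qPoch b)

lemma canc (a s b : ℕ) :
    (qPoch a * qPoch s * qPoch b) * Ring.inverse (qPoch a * qPoch s * qPoch b) = 1 :=
  Ring.mul_inverse_cancel _ (((isUnit_qPoch a).mul (isUnit_qPoch s)).mul (isUnit_qPoch b))

lemma L1 (a s b : ℕ) :
    (1 - (X : PowerSeries ℤ) ^ (a + 1 + (s + 1))) * trm (a + 1) (s + 1) b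
      = trm (a + 1) s b + (X : PowerSeries ℤ) ^ (b + (s + 1)) * trm a (s + 1) b := by
  have c1 : qPoch (a+1) * qPoch (s+1) * qPoch b * trm (a+1) (s+1) b
      = (X : PowerSeries ℤ) ^ ((a+1) * b) := by
    simp only [trm]
    linear_combination ((X : PowerSeries ℤ) ^ ((a+1) * b)) * canc (a+1) (s+1) b
  have c2 : qPoch (a+1) * qPoch (s+1) * qPoch b * trm (a+1) s b
      = (1 - (X : PowerSeries ℤ) ^ (s+1)) * (X : PowerSeries ℤ) ^ ((a+1) * b) := by
    simp only [trm]
    rw [qPoch_succ s]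
    linear_combination ((1 - (X : PowerSeries ℤ) ^ (s+1)) * (X : PowerSeries ℤ) ^ ((a+1) * b)) * canc (a+1) s b
  have c3 : qPoch (a+1) * qPoch (s+1) * qPoch b * trm a (s+1) b
      = (1 - (X : PowerSeries ℤ) ^ (a+1)) * (X : PowerSeries ℤ) ^ (a * b) := by
    simp only [trm]
    rw [qPoch_succ a]
    linear_combination ((1 - (X : PowerSeries ℤ) ^ (a+1)) * (X : PowerSeries ℤ) ^ (a * b)) * canc a (s+1) b
  apply (((isUnit_qPoch (a+1)).mul (isUnit_qPoch (s+1))).mul (isUnit_qPoch b)).mul_left_cancel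
  linear_combination (1 - (X : PowerSeries ℤ) ^ (a + 1 + (s + 1))) * c1 - c2
    - (X : PowerSeries ℤ) ^ (b + (s + 1)) * c3

lemma L0 (a b : ℕ) :
    (1 - (X : PowerSeries ℤ) ^ (a + 1)) * trm (a + 1) 0 b
      = (X : PowerSeries ℤ) ^ b * trm a 0 b := by
  have c1 : qPoch (a+1) * qPoch 0 * qPoch b * trm (a+1) 0 b
      = (X : PowerSeries ℤ) ^ ((a+1) * b) := by
    simp only [trm]
    linear_combination ((X : PowerSeries ℤ) ^ ((a+1) * b)) * canc (a+1) 0 b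
  have c3 : qPoch (a+1) * qPoch 0 * qPoch b * trm a 0 b
      = (1 - (X : PowerSeries ℤ) ^ (a+1)) * (X : PowerSeries ℤ) ^ (a * b) := by
    simp only [trm]
    rw [qPoch_succ a]
    linear_combination ((1 - (X : PowerSeries ℤ) ^ (a+1)) * (X : PowerSeries ℤ) ^ (a * b)) * canc a 0 b
  apply (((isUnit_qPoch (a+1)).mul (isUnit_qPoch 0)).mul (isUnit_qPoch b)).mul_left_cancel
  linear_combination (1 - (X : PowerSeries ℤ) ^ (a + 1)) * c1 - (X : PowerSeries ℤ) ^ b * c3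

lemma L2 (s b : ℕ) :
    (1 - (X : PowerSeries ℤ) ^ (s + 1)) * trm 0 (s + 1) b = trm 0 s b := by
  have c1 : qPoch 0 * qPoch (s+1) * qPoch b * trm 0 (s+1) b
      = (X : PowerSeries ℤ) ^ (0 * b) := by
    simp only [trm]
    linear_combination ((X : PowerSeries ℤ) ^ (0 * b)) * canc 0 (s+1) b
  have c2 : qPoch 0 * qPoch (s+1) * qPoch b * trm 0 s b
      = (1 - (X : PowerSeries ℤ) ^ (s+1)) * (X : PowerSeries ℤ) ^ (0 * b) := by
    simp only [trm]
    rw [qPoch_succ s]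
    linear_combination ((1 - (X : PowerSeries ℤ) ^ (s+1)) * (X : PowerSeries ℤ) ^ (0 * b)) * canc 0 s b
  apply (((isUnit_qPoch 0).mul (isUnit_qPoch (s+1))).mul (isUnit_qPoch b)).mul_left_cancel
  linear_combination (1 - (X : PowerSeries ℤ) ^ (s + 1)) * c1 - c2

lemma Lcongr {m n s : ℕ} (hsm : s < m) (hsn : s ≤ n) :
    (1 - (X : PowerSeries ℤ) ^ (m + 1)) * trm (m + 1 - (s + 1)) (s + 1) (n + 1 - (s + 1))
      = trm (m - s) s (n - s)
        + (X : PowerSeries ℤ) ^ (n + 1) * trm (m - (s + 1)) (s + 1) (n + 1 - (s + 1)) := by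
  obtain ⟨a, rfl⟩ : ∃ a, m = s + a + 1 := ⟨m - s - 1, by omega⟩
  rw [show n + 1 - (s + 1) = n - s from by omega,
      show s + a + 1 + 1 - (s + 1) = a + 1 from by omega,
      show s + a + 1 - s = a + 1 from by omega,
      show s + a + 1 - (s + 1) = a from by omega,
      show s + a + 1 + 1 = a + 1 + (s + 1) from by omega,
      show n + 1 = (n - s) + (s + 1) from by omega]
  exact L1 a s (n - s)

/-- The Durfee sum. -/
def Ssum (m n : ℕ) : PowerSeries ℤ :=
  ∑ s ∈ Finset.range (min m n + 1), trm (m - s) s (n - s)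

lemma Srec (m n : ℕ) :
    (1 - (X : PowerSeries ℤ) ^ (m + 1)) * Ssum (m + 1) (n + 1)
      = Ssum m n + (X : PowerSeries ℤ) ^ (n + 1) * Ssum m (n + 1) := by
  simp only [Ssum]
  rcases le_or_gt m n with h | h
  · rw [show min (m+1) (n+1) + 1 = m + 1 + 1 from by omega,
        show min m n + 1 = m + 1 from by omega,
        show min m (n+1) + 1 = m + 1 from by omega]
    have h1 : (1 - (X : PowerSeries ℤ) ^ (m + 1)) * ∑ s ∈ Finset.range (m+1+1), trm (m+1-s) s (n+1-s)
        = ∑ s ∈ Finset.range (m+1+1), (1 - (X : PowerSeries ℤ) ^ (m + 1)) * trm (m+1-s) s (n+1-s) :=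
      Finset.mul_sum _ _ _
    have h2 : ∑ s ∈ Finset.range (m+1+1), (1 - (X : PowerSeries ℤ) ^ (m + 1)) * trm (m+1-s) s (n+1-s)
        = (∑ s ∈ Finset.range (m+1), (1 - (X : PowerSeries ℤ) ^ (m + 1)) * trm (m+1-(s+1)) (s+1) (n+1-(s+1)))
          + (1 - (X : PowerSeries ℤ) ^ (m + 1)) * trm (m+1-0) 0 (n+1-0) :=
      Finset.sum_range_succ' _ _
    have h3 : ∑ s ∈ Finset.range (m+1), (1 - (X : PowerSeries ℤ) ^ (m + 1)) * trm (m+1-(s+1)) (s+1) (n+1-(s+1))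
        = (∑ s ∈ Finset.range m, (1 - (X : PowerSeries ℤ) ^ (m + 1)) * trm (m+1-(s+1)) (s+1) (n+1-(s+1)))
          + (1 - (X : PowerSeries ℤ) ^ (m + 1)) * trm (m+1-(m+1)) (m+1) (n+1-(m+1)) :=
      Finset.sum_range_succ _ _
    have h4 : ∑ s ∈ Finset.range m, (1 - (X : PowerSeries ℤ) ^ (m + 1)) * trm (m+1-(s+1)) (s+1) (n+1-(s+1))
        = ∑ s ∈ Finset.range m,
            (trm (m-s) s (n-s) + (X : PowerSeries ℤ) ^ (n+1) * trm (m-(s+1)) (s+1) (n+1-(s+1))) :=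
      Finset.sum_congr rfl (fun s hs => Lcongr (Finset.mem_range.mp hs) (by
        have := Finset.mem_range.mp hs; omega))
    have h5 : ∑ s ∈ Finset.range m,
          (trm (m-s) s (n-s) + (X : PowerSeries ℤ) ^ (n+1) * trm (m-(s+1)) (s+1) (n+1-(s+1)))
        = (∑ s ∈ Finset.range m, trm (m-s) s (n-s))
          + ∑ s ∈ Finset.range m, (X : PowerSeries ℤ) ^ (n+1) * trm (m-(s+1)) (s+1) (n+1-(s+1)) :=
      Finset.sum_add_distrib
    have h6 : (1 - (X : PowerSeries ℤ) ^ (m + 1)) * trm (m+1-0) 0 (n+1-0)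
        = (X : PowerSeries ℤ) ^ (n+1) * trm m 0 (n+1) := by
      simp only [Nat.sub_zero]
      exact L0 m (n+1)
    have h7 : (1 - (X : PowerSeries ℤ) ^ (m + 1)) * trm (m+1-(m+1)) (m+1) (n+1-(m+1))
        = trm 0 m (n-m) := by
      rw [Nat.sub_self, show n + 1 - (m + 1) = n - m from by omega]
      exact L2 m (n-m)
    have h8 : ∑ s ∈ Finset.range (m+1), trm (m-s) s (n-s)
        = (∑ s ∈ Finset.range m, trm (m-s) s (n-s)) + trm (m-m) m (n-m) :=
      Finset.sum_range_succ _ _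
    have h9 : trm (m-m) m (n-m) = trm 0 m (n-m) := by rw [Nat.sub_self]
    have h10 : (X : PowerSeries ℤ) ^ (n+1) * ∑ s ∈ Finset.range (m+1), trm (m-s) s (n+1-s)
        = ∑ s ∈ Finset.range (m+1), (X : PowerSeries ℤ) ^ (n+1) * trm (m-s) s (n+1-s) :=
      Finset.mul_sum _ _ _
    have h11 : ∑ s ∈ Finset.range (m+1), (X : PowerSeries ℤ) ^ (n+1) * trm (m-s) s (n+1-s)
        = (∑ s ∈ Finset.range m, (X : PowerSeries ℤ) ^ (n+1) * trm (m-(s+1)) (s+1) (n+1-(s+1)))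
          + (X : PowerSeries ℤ) ^ (n+1) * trm (m-0) 0 (n+1-0) :=
      Finset.sum_range_succ' _ _
    have h12 : (X : PowerSeries ℤ) ^ (n+1) * trm (m-0) 0 (n+1-0)
        = (X : PowerSeries ℤ) ^ (n+1) * trm m 0 (n+1) := by
      simp only [Nat.sub_zero]
    linear_combination h1 + h2 + h3 + h4 + h5 + h6 + h7 - h8 - h9 - h10 - h11 - h12
  · rw [show min (m+1) (n+1) + 1 = n + 1 + 1 from by omega,
        show min m n + 1 = n + 1 from by omega,
        show min m (n+1) + 1 = n + 1 + 1 from by omega]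
    have h1 : (1 - (X : PowerSeries ℤ) ^ (m + 1)) * ∑ s ∈ Finset.range (n+1+1), trm (m+1-s) s (n+1-s)
        = ∑ s ∈ Finset.range (n+1+1), (1 - (X : PowerSeries ℤ) ^ (m + 1)) * trm (m+1-s) s (n+1-s) :=
      Finset.mul_sum _ _ _
    have h2 : ∑ s ∈ Finset.range (n+1+1), (1 - (X : PowerSeries ℤ) ^ (m + 1)) * trm (m+1-s) s (n+1-s)
        = (∑ s ∈ Finset.range (n+1), (1 - (X : PowerSeries ℤ) ^ (m + 1)) * trm (m+1-(s+1)) (s+1) (n+1-(s+1)))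
          + (1 - (X : PowerSeries ℤ) ^ (m + 1)) * trm (m+1-0) 0 (n+1-0) :=
      Finset.sum_range_succ' _ _
    have h4 : ∑ s ∈ Finset.range (n+1), (1 - (X : PowerSeries ℤ) ^ (m + 1)) * trm (m+1-(s+1)) (s+1) (n+1-(s+1))
        = ∑ s ∈ Finset.range (n+1),
            (trm (m-s) s (n-s) + (X : PowerSeries ℤ) ^ (n+1) * trm (m-(s+1)) (s+1) (n+1-(s+1))) :=
      Finset.sum_congr rfl (fun s hs => Lcongr (by
        have := Finset.mem_range.mp hs; omega) (by
        have := Finset.mem_range.mp hs; omega))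
    have h5 : ∑ s ∈ Finset.range (n+1),
          (trm (m-s) s (n-s) + (X : PowerSeries ℤ) ^ (n+1) * trm (m-(s+1)) (s+1) (n+1-(s+1)))
        = (∑ s ∈ Finset.range (n+1), trm (m-s) s (n-s))
          + ∑ s ∈ Finset.range (n+1), (X : PowerSeries ℤ) ^ (n+1) * trm (m-(s+1)) (s+1) (n+1-(s+1)) :=
      Finset.sum_add_distrib
    have h6 : (1 - (X : PowerSeries ℤ) ^ (m + 1)) * trm (m+1-0) 0 (n+1-0)
        = (X : PowerSeries ℤ) ^ (n+1) * trm m 0 (n+1) := by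
      simp only [Nat.sub_zero]
      exact L0 m (n+1)
    have h10 : (X : PowerSeries ℤ) ^ (n+1) * ∑ s ∈ Finset.range (n+1+1), trm (m-s) s (n+1-s)
        = ∑ s ∈ Finset.range (n+1+1), (X : PowerSeries ℤ) ^ (n+1) * trm (m-s) s (n+1-s) :=
      Finset.mul_sum _ _ _
    have h11 : ∑ s ∈ Finset.range (n+1+1), (X : PowerSeries ℤ) ^ (n+1) * trm (m-s) s (n+1-s)
        = (∑ s ∈ Finset.range (n+1), (X : PowerSeries ℤ) ^ (n+1) * trm (m-(s+1)) (s+1) (n+1-(s+1)))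
          + (X : PowerSeries ℤ) ^ (n+1) * trm (m-0) 0 (n+1-0) :=
      Finset.sum_range_succ' _ _
    have h12 : (X : PowerSeries ℤ) ^ (n+1) * trm (m-0) 0 (n+1-0)
        = (X : PowerSeries ℤ) ^ (n+1) * trm m 0 (n+1) := by
      simp only [Nat.sub_zero]
    linear_combination h1 + h2 + h4 + h5 + h6 - h10 - h11 - h12

lemma Ssum_eq (m : ℕ) : ∀ n, Ssum m n = Ring.inverse (qPoch m * qPoch n) := by
  induction m with
  | zero =>
    intro n
    simp only [Ssum]
    rw [show min 0 n + 1 = 1 from by omega, Finset.sum_range_one]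
    simp [trm, qPoch_zero]
  | succ m IH =>
    intro n
    cases n with
    | zero =>
      simp only [Ssum]
      rw [show min (m+1) 0 + 1 = 1 from by omega, Finset.sum_range_one]
      simp [trm, qPoch_zero]
    | succ n =>
      have key : Ring.inverse (qPoch m * qPoch n)
            + (X : PowerSeries ℤ) ^ (n+1) * Ring.inverse (qPoch m * qPoch (n+1))
          = (1 - (X : PowerSeries ℤ) ^ (m+1)) * Ring.inverse (qPoch (m+1) * qPoch (n+1)) := by
        apply IsUnit.mul_left_cancel ((isUnit_qPoch (m+1)).mul (isUnit_qPoch (n+1)))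
        have k1 := Ring.mul_inverse_cancel (qPoch m * qPoch n)
          ((isUnit_qPoch m).mul (isUnit_qPoch n))
        have k2 := Ring.mul_inverse_cancel (qPoch m * qPoch (n+1))
          ((isUnit_qPoch m).mul (isUnit_qPoch (n+1)))
        have k3 := Ring.mul_inverse_cancel (qPoch (m+1) * qPoch (n+1))
          ((isUnit_qPoch (m+1)).mul (isUnit_qPoch (n+1)))
        rw [qPoch_succ n] at k2
        rw [qPoch_succ m, qPoch_succ n] at k3 ⊢
        linear_combination ((1 - (X : PowerSeries ℤ) ^ (m+1)) * (1 - (X : PowerSeries ℤ) ^ (n+1))) * k1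
          + ((X : PowerSeries ℤ) ^ (n+1) * (1 - (X : PowerSeries ℤ) ^ (m+1))) * k2
          - (1 - (X : PowerSeries ℤ) ^ (m+1)) * k3
      have h := Srec m n
      rw [IH n, IH (n+1), key] at h
      exact (isUnit_one_sub m).mul_left_cancel h

theorem stmt8 (m n : ℕ) :
    Ring.inverse (qPoch m * qPoch n)
    = ∑ s ∈ Finset.range (min m n + 1),
        (X : PowerSeries ℤ) ^ ((m - s) * (n - s)) *
          Ring.inverse (qPoch (m - s) * qPoch s * qPoch (n - s)) := by
  have h := Ssum_eq m n
  simp only [Ssum, trm] at h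
  exact h.symm
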